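/- Let $g : [1, M] \to \mathbb{R}$ be $C^3$ with $\mu \leq |g'''(x)| \leq C\mu$ for $1 \leq x \leq M$, where $0 < \mu < 1$ and $M \leq \mu^{-1/2}$. Let $u : [1, M] \to \mathbb{R}$ be $C^1$ with $|u'(x)| \leq \mu^{1/2}$. Then $\left|\sum_{m=1}^{M} e^{2\pi i(g(m)+u(m))}\right| \leq C_1 \left(\max_{1 \leq M' \leq M} \left|\sum_{m=1}^{M'} e^{2\pi i g(m)}\right| \right)$ for a constant $C_1$ depending only on $C$; in particular, assuming the third derivative test $\left|\sum_{m=1}^{M'} e^{2\pi i g(m)}\right| \leq C_2(M'\mu^{1/6} + \mu^{-1/3})$, one gets $\left|\sum_{m=1}^{M} e^{2\pi i(g(m)+u(m))}\right| \leq C_3(M\mu^{1/6} + \mu^{-1/3})$. -/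

import Mathlib

open Finset

lemma exp_lip (a b : ℝ) :
    ‖Complex.exp (2 * Real.pi * Complex.I * a) - Complex.exp (2 * Real.pi * Complex.I * b)‖
      ≤ 2 * Real.pi * |a - b| := by
  have h := Convex.norm_image_sub_le_of_norm_deriv_le
    (f := fun t : ℝ => Complex.exp (2 * Real.pi * Complex.I * t))
    (C := 2 * Real.pi) (s := Set.univ)
    (fun x _ => by
      exact (Complex.ofRealCLM.differentiableAt.const_mul (2 * Real.pi * Complex.I)).cexp)
    (fun x _ => by
      have : deriv (fun t : ℝ => Complex.exp (2 * Real.pi * Complex.I * t)) x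
          = (2 * Real.pi * Complex.I) * Complex.exp (2 * Real.pi * Complex.I * x) := by
        have h1 : HasDerivAt (fun t : ℝ => ((t : ℂ))) 1 x := by
          simpa using (hasDerivAt_id x).ofReal_comp
        have h2 : HasDerivAt (fun t : ℝ => 2 * Real.pi * Complex.I * (t : ℂ))
            (2 * Real.pi * Complex.I) x := by
          simpa using h1.const_mul (2 * Real.pi * Complex.I)
        have := h2.cexp
        simpa [mul_comm] using this.deriv
      rw [this]
      rw [norm_mul]
      have he : ‖Complex.exp (2 * Real.pi * Complex.I * x)‖ = 1 := by
        have : (2 * Real.pi * Complex.I * x) = ((2 * Real.pi * x : ℝ) : ℂ) * Complex.I := by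
          push_cast; ring
        rw [this]
        simpa using Complex.norm_exp_ofReal_mul_I (2 * Real.pi * x)
      rw [he, mul_one]
      have : ‖(2 * Real.pi * Complex.I : ℂ)‖ = 2 * Real.pi := by
        simp [norm_mul, Real.pi_nonneg, abs_of_nonneg]
      rw [this])
    convex_univ (Set.mem_univ b) (Set.mem_univ a)
  simpa [Real.norm_eq_abs] using h

lemma exp_norm_one (a : ℝ) : ‖Complex.exp (2 * Real.pi * Complex.I * a)‖ = 1 := by
  have : (2 * Real.pi * Complex.I * a) = ((2 * Real.pi * a : ℝ) : ℂ) * Complex.I := by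
    push_cast; ring
  rw [this]
  simpa using Complex.norm_exp_ofReal_mul_I (2 * Real.pi * a)

theorem short_sum_partial_summation :
    ∀ C C₂ : ℝ, 0 < C → 0 < C₂ → ∃ C₁ C₃ : ℝ, 0 < C₁ ∧ 0 < C₃ ∧
      ∀ (M : ℕ) (μ : ℝ) (g u : ℝ → ℝ) (hM : 0 < M),
        0 < μ → μ < 1 → (M : ℝ) ≤ μ ^ (-(1 : ℝ) / 2) →
        ContDiff ℝ 3 g → ContDiff ℝ 1 u →
        (∀ x ∈ Set.Icc (1 : ℝ) (M : ℝ),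
          μ ≤ |iteratedDeriv 3 g x| ∧ |iteratedDeriv 3 g x| ≤ C * μ) →
        (∀ x ∈ Set.Icc (1 : ℝ) (M : ℝ), |deriv u x| ≤ μ ^ ((1 : ℝ) / 2)) →
        (‖∑ m ∈ Finset.Icc 1 M,
              Complex.exp (2 * Real.pi * Complex.I * ((g m + u m : ℝ) : ℂ))‖
            ≤ C₁ * (Finset.Icc 1 M).sup' (Finset.nonempty_Icc.mpr hM)
                (fun M' => ‖∑ m ∈ Finset.Icc 1 M',
                    Complex.exp (2 * Real.pi * Complex.I * ((g m : ℝ) : ℂ))‖)) ∧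
        ((∀ M' : ℕ, 1 ≤ M' → M' ≤ M →
            ‖∑ m ∈ Finset.Icc 1 M',
                Complex.exp (2 * Real.pi * Complex.I * ((g m : ℝ) : ℂ))‖
              ≤ C₂ * ((M' : ℝ) * μ ^ ((1 : ℝ) / 6) + μ ^ (-(1 : ℝ) / 3))) →
          ‖∑ m ∈ Finset.Icc 1 M,
              Complex.exp (2 * Real.pi * Complex.I * ((g m + u m : ℝ) : ℂ))‖
            ≤ C₃ * ((M : ℝ) * μ ^ ((1 : ℝ) / 6) + μ ^ (-(1 : ℝ) / 3))) := by
  intro C C₂ hC hC₂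
  refine ⟨1 + 2 * Real.pi, (1 + 2 * Real.pi) * C₂, by positivity, by positivity, ?_⟩
  intro M μ g u hM hμ hμ1 hMle hg hu hg3 hu'
  set T := (Finset.Icc 1 M).sup' (Finset.nonempty_Icc.mpr hM)
      (fun M' => ‖∑ m ∈ Finset.Icc 1 M',
          Complex.exp (2 * Real.pi * Complex.I * ((g m : ℝ) : ℂ))‖) with hT
  -- reindexing
  have reindex : ∀ (F : ℕ → ℂ) (k : ℕ),
      ∑ m ∈ Finset.Icc 1 k, F m = ∑ i ∈ Finset.range k, F (1 + i) := by
    intro F k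
    rw [← Finset.Ico_add_one_right_eq_Icc, Finset.sum_Ico_eq_sum_range]
    simp
  set G : ℕ → ℂ := fun i => Complex.exp (2 * Real.pi * Complex.I * ((g ((1 + i : ℕ) : ℝ) : ℝ) : ℂ)) with hG
  set F : ℕ → ℂ := fun i => Complex.exp (2 * Real.pi * Complex.I * ((u ((1 + i : ℕ) : ℝ) : ℝ) : ℂ)) with hF
  have hTnonneg : 0 ≤ T := by
    refine le_trans (norm_nonneg _)
      (Finset.le_sup' (fun M' : ℕ => ‖∑ m ∈ Finset.Icc 1 M',
        Complex.exp (2 * Real.pi * Complex.I * ((g m : ℝ) : ℂ))‖)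
        (Finset.mem_Icc.mpr ⟨le_refl 1, hM⟩))
  have hSle : ∀ k : ℕ, 1 ≤ k → k ≤ M → ‖∑ i ∈ Finset.range k, G i‖ ≤ T := by
    intro k hk1 hk2
    have h := Finset.le_sup' (fun M' : ℕ => ‖∑ m ∈ Finset.Icc 1 M',
        Complex.exp (2 * Real.pi * Complex.I * ((g m : ℝ) : ℂ))‖)
        (Finset.mem_Icc.mpr ⟨hk1, hk2⟩)
    rw [reindex] at h
    exact h
  -- the key arithmetic fact
  have hone : (M : ℝ) * μ ^ ((1 : ℝ) / 2) ≤ 1 := by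
    have h2 : μ ^ (-(1 : ℝ) / 2) * μ ^ ((1 : ℝ) / 2) = 1 := by
      rw [← Real.rpow_add hμ]; norm_num
    calc (M : ℝ) * μ ^ ((1 : ℝ) / 2)
        ≤ μ ^ (-(1 : ℝ) / 2) * μ ^ ((1 : ℝ) / 2) := by
          apply mul_le_mul_of_nonneg_right hMle (Real.rpow_nonneg hμ.le _)
      _ = 1 := h2
  -- difference bound
  have hdiff : ∀ i ∈ Finset.range (M - 1),
      ‖F (i + 1) - F i‖ ≤ 2 * Real.pi * μ ^ ((1 : ℝ) / 2) := by
    intro i hi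
    have hi' : i + 2 ≤ M := by
      have := Finset.mem_range.mp hi; omega
    have h1 : ((1 + (i + 1) : ℕ) : ℝ) ∈ Set.Icc (1 : ℝ) (M : ℝ) := by
      constructor
      · push_cast; linarith [Nat.cast_nonneg (α := ℝ) i]
      · push_cast
        have : ((i : ℝ) + 2) ≤ M := by exact_mod_cast hi'
        linarith
    have h0 : ((1 + i : ℕ) : ℝ) ∈ Set.Icc (1 : ℝ) (M : ℝ) := by
      constructor
      · push_cast; linarith [Nat.cast_nonneg (α := ℝ) i]
      · push_cast
        have : ((i : ℝ) + 2) ≤ M := by exact_mod_cast hi'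
        linarith
    have humvt : |u ((1 + (i + 1) : ℕ) : ℝ) - u ((1 + i : ℕ) : ℝ)| ≤ μ ^ ((1 : ℝ) / 2) := by
      have := Convex.norm_image_sub_le_of_norm_deriv_le
        (f := u) (C := μ ^ ((1 : ℝ) / 2)) (s := Set.Icc (1 : ℝ) (M : ℝ))
        (fun x _ => (hu.differentiable one_ne_zero).differentiableAt)
        (fun x hx => by simpa [Real.norm_eq_abs] using hu' x hx)
        (convex_Icc _ _) h0 h1
      have hd : ((1 + (i + 1) : ℕ) : ℝ) - ((1 + i : ℕ) : ℝ) = 1 := by push_cast; ring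
      simpa [Real.norm_eq_abs, hd] using this
    calc ‖F (i + 1) - F i‖
        ≤ 2 * Real.pi * |u ((1 + (i + 1) : ℕ) : ℝ) - u ((1 + i : ℕ) : ℝ)| := exp_lip _ _
      _ ≤ 2 * Real.pi * μ ^ ((1 : ℝ) / 2) := by
          apply mul_le_mul_of_nonneg_left humvt (by positivity)
  -- first bound
  have key : ‖∑ m ∈ Finset.Icc 1 M,
      Complex.exp (2 * Real.pi * Complex.I * ((g m + u m : ℝ) : ℂ))‖
      ≤ (1 + 2 * Real.pi) * T := by
    have hsplit : ∑ m ∈ Finset.Icc 1 M,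
        Complex.exp (2 * Real.pi * Complex.I * ((g m + u m : ℝ) : ℂ))
        = ∑ i ∈ Finset.range M, F i * G i := by
      rw [reindex]
      apply Finset.sum_congr rfl
      intro i _
      rw [hF, hG]
      dsimp only
      rw [← Complex.exp_add]
      congr 1
      push_cast
      ring
    rw [hsplit]
    have hbp := Finset.sum_range_by_parts F G M
    simp only [smul_eq_mul] at hbp
    rw [hbp]
    have hnorm1 : ‖F (M - 1) * ∑ i ∈ Finset.range M, G i‖ ≤ T := by
      rw [norm_mul]
      have : ‖F (M - 1)‖ = 1 := exp_norm_one _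
      rw [this, one_mul]
      exact hSle M hM le_rfl
    have hnorm2 : ‖∑ i ∈ Finset.range (M - 1),
        (F (i + 1) - F i) * ∑ j ∈ Finset.range (i + 1), G j‖ ≤ 2 * Real.pi * T := by
      calc ‖∑ i ∈ Finset.range (M - 1),
            (F (i + 1) - F i) * ∑ j ∈ Finset.range (i + 1), G j‖
          ≤ ∑ i ∈ Finset.range (M - 1),
            ‖(F (i + 1) - F i) * ∑ j ∈ Finset.range (i + 1), G j‖ := norm_sum_le _ _
        _ ≤ ∑ i ∈ Finset.range (M - 1), (2 * Real.pi * μ ^ ((1 : ℝ) / 2)) * T := by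
            apply Finset.sum_le_sum
            intro i hi
            rw [norm_mul]
            apply mul_le_mul (hdiff i hi)
              (hSle (i + 1) (by omega) (by have := Finset.mem_range.mp hi; omega))
              (norm_nonneg _) (by positivity)
        _ = (M - 1 : ℕ) * ((2 * Real.pi * μ ^ ((1 : ℝ) / 2)) * T) := by
            rw [Finset.sum_const, Finset.card_range, nsmul_eq_mul]
        _ ≤ 2 * Real.pi * T := by
            have hcast : ((M - 1 : ℕ) : ℝ) ≤ (M : ℝ) := by
              exact_mod_cast Nat.sub_le M 1
            have h3 : ((M - 1 : ℕ) : ℝ) * μ ^ ((1 : ℝ) / 2) ≤ 1 :=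
              le_trans (mul_le_mul_of_nonneg_right hcast (Real.rpow_nonneg hμ.le _)) hone
            calc ((M - 1 : ℕ) : ℝ) * ((2 * Real.pi * μ ^ ((1 : ℝ) / 2)) * T)
                = (((M - 1 : ℕ) : ℝ) * μ ^ ((1 : ℝ) / 2)) * (2 * Real.pi * T) := by ring
              _ ≤ 1 * (2 * Real.pi * T) := by
                  apply mul_le_mul_of_nonneg_right h3 (by positivity)
              _ = 2 * Real.pi * T := one_mul _
    calc ‖F (M - 1) * ∑ i ∈ Finset.range M, G i - ∑ i ∈ Finset.range (M - 1),
          (F (i + 1) - F i) * ∑ j ∈ Finset.range (i + 1), G j‖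
        ≤ ‖F (M - 1) * ∑ i ∈ Finset.range M, G i‖ + ‖∑ i ∈ Finset.range (M - 1),
          (F (i + 1) - F i) * ∑ j ∈ Finset.range (i + 1), G j‖ := norm_sub_le _ _
      _ ≤ T + 2 * Real.pi * T := add_le_add hnorm1 hnorm2
      _ = (1 + 2 * Real.pi) * T := by ring
  refine ⟨key, ?_⟩
  intro h3
  have hTB : T ≤ C₂ * ((M : ℝ) * μ ^ ((1 : ℝ) / 6) + μ ^ (-(1 : ℝ) / 3)) := by
    apply Finset.sup'_le
    intro k hk
    obtain ⟨hk1, hk2⟩ := Finset.mem_Icc.mp hk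
    refine le_trans (h3 k hk1 hk2) ?_
    have : (k : ℝ) ≤ (M : ℝ) := by exact_mod_cast hk2
    gcongr
  calc ‖∑ m ∈ Finset.Icc 1 M,
      Complex.exp (2 * Real.pi * Complex.I * ((g m + u m : ℝ) : ℂ))‖
      ≤ (1 + 2 * Real.pi) * T := key
    _ ≤ (1 + 2 * Real.pi) * (C₂ * ((M : ℝ) * μ ^ ((1 : ℝ) / 6) + μ ^ (-(1 : ℝ) / 3))) := by
        apply mul_le_mul_of_nonneg_left hTB (by positivity)
    _ = (1 + 2 * Real.pi) * C₂ * ((M : ℝ) * μ ^ ((1 : ℝ) / 6) + μ ^ (-(1 : ℝ) / 3)) := by ring
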